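/- Let A : U → G be a discrete connection form with D-type domain U. For (q,r) ∈ U' := (id_P × π)(U) define h_A(q,r) := (q, A(q,q')⁻¹ • q'), where q' is any point with π(q') = r and (q,q') ∈ U. Then: (a) h_A(q,r) does not depend on the choice of q'; and (b) h_A is a discrete horizontal lift with domain U', i.e., if h_A(q,r) = (q₀',q₁') then h_A(g • q, r) = (g • q₀', g • q₁') for all g ∈ G, (id_P × π)(h_A(q,r)) = (q,r) for all (q,r) ∈ U', and h_A(q,π(q)) = (q,q) for all q ∈ P. -/
import Mathlib

/-- given a discrete connection form `A` with D-type domain `U`,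
the formula `h_A(q,r) := (q, A(q,q')⁻¹ • q')` (for any `q'` over `r` with `(q,q') ∈ U`)
is independent of the choice of `q'` and defines a discrete horizontal lift with
domain `U' = (id × π)(U)`. -/
theorem discrete_connection_form_gives_horizontal_lift
    {G : Type*} [Group G] {P : Type*} [MulAction G P] {B : Type*}
    (π : P → B)
    (hfree : ∀ (g : G) (q : P), g • q = q → g = 1)
    (hπ : ∀ q₀ q₁ : P, π q₀ = π q₁ ↔ ∃ g : G, g • q₀ = q₁)
    (U : Set (P × P))
    (hUinv : ∀ q₀ q₁ : P, (q₀, q₁) ∈ U → ∀ g₀ g₁ : G, (g₀ • q₀, g₁ • q₁) ∈ U)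
    (hUvert : ∀ q₀ q₁ : P, π q₀ = π q₁ → (q₀, q₁) ∈ U)
    (A : P → P → G)
    (hAid : ∀ q : P, A q q = 1)
    (hAequiv : ∀ q₀ q₁ : P, (q₀, q₁) ∈ U → ∀ g₀ g₁ : G,
      A (g₀ • q₀) (g₁ • q₁) = g₁ * A q₀ q₁ * g₀⁻¹) :
    -- (a) the value `h_A(q,r) = (q, A(q,q')⁻¹ • q')` does not depend on the choice of `q'`
    (∀ (q : P) (r : B) (q' q'' : P), π q' = r → π q'' = r →
      (q, q') ∈ U → (q, q'') ∈ U →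
      (A q q')⁻¹ • q' = (A q q'')⁻¹ • q'') ∧
    -- (b)(i) equivariance: `h_A(g • q, r) = (g • q, g • (A(q,q')⁻¹ • q'))`
    (∀ (q : P) (r : B) (q' : P), π q' = r → (q, q') ∈ U → ∀ g : G,
      (A (g • q) q')⁻¹ • q' = g • ((A q q')⁻¹ • q')) ∧
    -- (b)(ii) section: `(id × π)(h_A(q,r)) = (q,r)` (the first component is `q` by
    -- definition, so only the second component is stated)
    (∀ (q : P) (r : B) (q' : P), π q' = r → (q, q') ∈ U →
      π ((A q q')⁻¹ • q') = r) ∧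
    -- (b)(iii) normalization: `h_A(q, π(q)) = (q, q)`
    (∀ (q q' : P), π q' = π q → (q, q') ∈ U →
      (A q q')⁻¹ • q' = q) := by
  refine ⟨?_, ?_, ?_, ?_⟩
  · intro q r q' q'' h' h'' hU' hU''
    obtain ⟨g, hg⟩ := (hπ q' q'').mp (h'.trans h''.symm)
    have hA : A q q'' = g * A q q' := by
      have := hAequiv q q' hU' 1 g
      simpa [hg] using this
    rw [hA, ← hg, mul_inv_rev, mul_smul, inv_smul_smul]
  · intro q r q' h' hU' g
    have hA : A (g • q) q' = A q q' * g⁻¹ := by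
      have := hAequiv q q' hU' g 1
      simpa using this
    rw [hA, mul_inv_rev, inv_inv, mul_smul]
  · intro q r q' h' hU'
    rw [← h']
    exact ((hπ q' _).mpr ⟨(A q q')⁻¹, rfl⟩).symm
  · intro q q' h hU'
    obtain ⟨g, hg⟩ := (hπ q q').mp h.symm
    have hA : A q q' = g := by
      have := hAequiv q q (hUvert q q rfl) 1 g
      simpa [hg, hAid] using this
    rw [hA, ← hg, inv_smul_smul]
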